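/- Let f : ℝ^d → ℝ be differentiable with minimizer f* and suppose that for all x, x', |f(x') - f(x)| ≤ ((M₀/M₁) + (f(x) - f*)) · (exp(M₁‖x' - x‖) - 1), with M₀, M₁ > 0. Then ‖∇f(x)‖ ≤ M₀ + M₁(f(x) - f*) for all x ∈ ℝ^d. -/

import Mathlib

open Real

theorem grad_bound_of_generalized_lipschitz {d : ℕ}
    (f : EuclideanSpace ℝ (Fin d) → ℝ) (xstar : EuclideanSpace ℝ (Fin d)) (M₀ M₁ : ℝ)
    (hf : Differentiable ℝ f)
    (hmin : ∀ y, f xstar ≤ f y)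
    (hM₀ : 0 < M₀) (hM₁ : 0 < M₁)
    (hlip : ∀ x x' : EuclideanSpace ℝ (Fin d),
      |f x' - f x| ≤ (M₀ / M₁ + (f x - f xstar)) * (Real.exp (M₁ * ‖x' - x‖) - 1)) :
    ∀ x, ‖gradient f x‖ ≤ M₀ + M₁ * (f x - f xstar) := by
  intro x
  set v := gradient f x with hv
  set C := M₀ / M₁ + (f x - f xstar) with hC
  -- key: |fderiv applied to v| ≤ C * M₁ * ‖v‖
  have hfder : HasFDerivAt f (InnerProductSpace.toDual ℝ _ v) x :=
    ((hf x).hasGradientAt : HasGradientAt f v x).hasFDerivAt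
  -- h(t) = f (x + t • v) has derivative ⟪v, v⟫ = ‖v‖² at 0
  have hline : HasDerivAt (fun t : ℝ => f (x + t • v)) (‖v‖ ^ 2) 0 := by
    have h1 : HasDerivAt (fun t : ℝ => x + t • v) v 0 := by
      simpa using ((hasDerivAt_id (0 : ℝ)).smul_const v).const_add x
    have hfder' : HasFDerivAt f (InnerProductSpace.toDual ℝ _ v) (x + (0:ℝ) • v) := by
      simpa using hfder
    have h2 := hfder'.comp_hasDerivAt 0 h1
    rw [InnerProductSpace.toDual_apply_apply, real_inner_self_eq_norm_sq] at h2
    exact h2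
  -- tendsto of difference quotient along 𝓝[>] 0
  have hquot : Filter.Tendsto (fun t : ℝ => (f (x + t • v) - f x) / t) (nhdsWithin 0 (Set.Ioi 0))
      (nhds (‖v‖ ^ 2)) := by
    have := hline.hasDerivWithinAt (s := Set.Ioi (0:ℝ))
    have h2 := (hasDerivWithinAt_iff_tendsto_slope.mp this)
    have h3 : Filter.Tendsto (slope (fun t : ℝ => f (x + t • v)) 0)
        (nhdsWithin 0 (Set.Ioi 0)) (nhds (‖v‖ ^ 2)) := by
      refine h2.mono_left (nhdsWithin_mono _ ?_)
      intro t ht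
      exact ⟨ht, ne_of_gt ht⟩
    refine h3.congr' ?_
    filter_upwards [self_mem_nhdsWithin] with t ht
    simp [slope_def_field, div_eq_inv_mul]
  -- tendsto of the bound function
  have hbound : Filter.Tendsto (fun t : ℝ => C * (Real.exp (M₁ * (t * ‖v‖)) - 1) / t)
      (nhdsWithin 0 (Set.Ioi 0)) (nhds (C * (M₁ * ‖v‖))) := by
    have hφ : HasDerivAt (fun t : ℝ => C * (Real.exp (M₁ * (t * ‖v‖)) - 1)) (C * (M₁ * ‖v‖)) 0 := by
      have he : HasDerivAt (fun t : ℝ => Real.exp (M₁ * (t * ‖v‖))) (M₁ * ‖v‖) 0 := by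
        have harg : HasDerivAt (fun t : ℝ => M₁ * (t * ‖v‖)) (M₁ * ‖v‖) 0 := by
          simpa using ((hasDerivAt_id (0:ℝ)).mul_const ‖v‖).const_mul M₁
        simpa [Function.comp_def] using (Real.hasDerivAt_exp (M₁ * (0 * ‖v‖))).comp 0 harg
      simpa [mul_comm] using (he.sub_const 1).const_mul C
    have := (hφ.hasDerivWithinAt (s := Set.Ioi (0:ℝ)))
    have h2 := hasDerivWithinAt_iff_tendsto_slope.mp this
    have h3 : Filter.Tendsto (slope (fun t : ℝ => C * (Real.exp (M₁ * (t * ‖v‖)) - 1)) 0)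
        (nhdsWithin 0 (Set.Ioi 0)) (nhds (C * (M₁ * ‖v‖))) := by
      refine h2.mono_left (nhdsWithin_mono _ ?_)
      intro t ht
      exact ⟨ht, ne_of_gt ht⟩
    refine h3.congr' ?_
    filter_upwards [self_mem_nhdsWithin] with t ht
    simp [slope_def_field, div_eq_inv_mul]
  -- eventual inequality
  have hineq : ∀ᶠ t in nhdsWithin (0:ℝ) (Set.Ioi 0),
      (f (x + t • v) - f x) / t ≤ C * (Real.exp (M₁ * (t * ‖v‖)) - 1) / t := by
    filter_upwards [self_mem_nhdsWithin] with t (ht : (0:ℝ) < t)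
    refine div_le_div_of_nonneg_right ?_ ht.le
    calc f (x + t • v) - f x ≤ |f (x + t • v) - f x| := le_abs_self _
      _ ≤ C * (Real.exp (M₁ * ‖(x + t • v) - x‖) - 1) := hlip x (x + t • v)
      _ = C * (Real.exp (M₁ * (t * ‖v‖)) - 1) := by
          rw [add_sub_cancel_left, norm_smul, Real.norm_eq_abs, abs_of_pos ht]
  have hNe : (nhdsWithin (0:ℝ) (Set.Ioi 0)).NeBot := by infer_instance
  have key : ‖v‖ ^ 2 ≤ C * (M₁ * ‖v‖) := le_of_tendsto_of_tendsto hquot hbound hineq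
  -- conclude
  rcases eq_or_lt_of_le (norm_nonneg v) with h0 | h0
  · rw [← h0]
    have hfx : f xstar ≤ f x := hmin x
    nlinarith [mul_nonneg hM₁.le (sub_nonneg.mpr hfx)]
  · have h1 : ‖v‖ * ‖v‖ ≤ (C * M₁) * ‖v‖ := by nlinarith [key]
    have h2 : ‖v‖ ≤ C * M₁ := le_of_mul_le_mul_right h1 h0
    calc ‖v‖ ≤ C * M₁ := h2
      _ = M₀ + M₁ * (f x - f xstar) := by
          rw [hC, add_mul, div_mul_cancel₀ _ hM₁.ne']
          ring
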